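/- Let (R, m) be a Noetherian local Gorenstein ring of prime characteristic p and dimension d. If the map H^d_m(R) → H^d_m(F_*R) induced by Frobenius is injective, then R is F-pure, i.e., the Frobenius map R → F_*R is a pure map of R-modules. -/

import Mathlib

universe u

open CategoryTheory CategoryTheory.Limits Opposite

namespace FPureAux

section OpLinear

variable {S : Type*} [Semiring S]
variable {A : Type*} [Category A] [Preadditive A] [CategoryTheory.Linear S A]

instance opHomSMul (X Y : Aᵒᵖ) : SMul S (X ⟶ Y) :=
  ⟨fun r f => (r • f.unop).op⟩

@[simp] lemma unop_smul {X Y : Aᵒᵖ} (r : S) (f : X ⟶ Y) :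
    (r • f).unop = r • f.unop := rfl

@[simp] lemma op_smul {X Y : A} (r : S) (f : X ⟶ Y) :
    (r • f).op = r • f.op := rfl

instance opLinear : CategoryTheory.Linear S Aᵒᵖ where
  homModule X Y :=
    { smul := (· • ·)
      one_smul := fun f => Quiver.Hom.unop_inj (one_smul S f.unop)
      mul_smul := fun r s f => Quiver.Hom.unop_inj (mul_smul r s f.unop)
      smul_zero := fun r => Quiver.Hom.unop_inj (by simp)
      smul_add := fun r f g => Quiver.Hom.unop_inj (by simp [smul_add])
      add_smul := fun r s f => Quiver.Hom.unop_inj (by simp [add_smul])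
      zero_smul := fun f => Quiver.Hom.unop_inj (by simp) }
  smul_comp X Y Z r f g := Quiver.Hom.unop_inj (by simp)
  comp_smul X Y Z f r g := Quiver.Hom.unop_inj (by simp)

lemma homologyMap_smul {ι : Type*} {c : ComplexShape ι}
    {K L : HomologicalComplex A c} (φ : K ⟶ L) (i : ι)
    [K.HasHomology i] [L.HasHomology i] (r : S) :
    HomologicalComplex.homologyMap (r • φ) i = r • HomologicalComplex.homologyMap φ i := by
  dsimp only [HomologicalComplex.homologyMap]
  exact ShortComplex.homologyMap_smul ((HomologicalComplex.shortComplexFunctor A c i).map φ) r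

end OpLinear

section MapHC

variable {S : Type*} [Semiring S]
variable {W₁ W₂ : Type*} [Category W₁] [Category W₂] [Preadditive W₁] [Preadditive W₂]
variable {ι : Type*} (c : ComplexShape ι)

lemma mapHomologicalComplex_app_add [CategoryTheory.Linear S W₂]
    {F G : W₁ ⥤ W₂} [F.Additive] [G.Additive] (α β : F ⟶ G)
    (K : HomologicalComplex W₁ c) :
    (NatTrans.mapHomologicalComplex (α + β) c).app K
      = (NatTrans.mapHomologicalComplex α c).app K
        + (NatTrans.mapHomologicalComplex β c).app K := by
  ext i
  rfl

lemma mapHomologicalComplex_app_smul [CategoryTheory.Linear S W₂]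
    {F G : W₁ ⥤ W₂} [F.Additive] [G.Additive] (r : S) (α : F ⟶ G)
    (K : HomologicalComplex W₁ c) :
    (NatTrans.mapHomologicalComplex (r • α) c).app K
      = r • (NatTrans.mapHomologicalComplex α c).app K := by
  ext i
  rfl

end MapHC

section ExtLemmas

variable (R : Type u) [CommRing R]

lemma linearYoneda_map_add {Y Y' : ModuleCat.{u} R} (f g : Y ⟶ Y') :
    (linearYoneda R (ModuleCat.{u} R)).map (f + g)
      = (linearYoneda R (ModuleCat.{u} R)).map f + (linearYoneda R (ModuleCat.{u} R)).map g := by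
  ext X φ
  exact Preadditive.comp_add _ _ _ φ f g

lemma linearYoneda_map_smul {Y Y' : ModuleCat.{u} R} (r : R) (f : Y ⟶ Y') :
    (linearYoneda R (ModuleCat.{u} R)).map (r • f)
      = r • (linearYoneda R (ModuleCat.{u} R)).map f := by
  ext X φ
  exact Linear.comp_smul _ _ _ φ r f

lemma Ext_map_eq (n : ℕ) (X : (ModuleCat.{u} R)ᵒᵖ) {Y Y' : ModuleCat.{u} R} (f : Y ⟶ Y')
    (P : ProjectiveResolution X.unop) :
    ((Ext R (ModuleCat.{u} R) n).obj X).map f =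
      ((P.isoLeftDerivedObj ((linearYoneda R (ModuleCat.{u} R)).obj Y').rightOp n).hom ≫
        (HomologicalComplex.homologyFunctor _ _ n).map
          ((NatTrans.mapHomologicalComplex
            (NatTrans.rightOp ((linearYoneda R (ModuleCat.{u} R)).map f)) _).app P.complex) ≫
        (P.isoLeftDerivedObj ((linearYoneda R (ModuleCat.{u} R)).obj Y).rightOp n).inv).unop := by
  show ((NatTrans.leftDerived (NatTrans.rightOp ((linearYoneda R (ModuleCat.{u} R)).map f)) n).app
      X.unop).unop = _
  rw [ProjectiveResolution.leftDerived_app_eq _ P]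

lemma Ext_obj_map_add (n : ℕ) (X : (ModuleCat.{u} R)ᵒᵖ) {Y Y' : ModuleCat.{u} R}
    (f g : Y ⟶ Y') :
    ((Ext R (ModuleCat.{u} R) n).obj X).map (f + g)
      = ((Ext R (ModuleCat.{u} R) n).obj X).map f
        + ((Ext R (ModuleCat.{u} R) n).obj X).map g := by
  obtain ⟨P⟩ : Nonempty (ProjectiveResolution X.unop) := HasProjectiveResolution.out
  rw [Ext_map_eq R n X (f + g) P, Ext_map_eq R n X f P, Ext_map_eq R n X g P]
  have e1 : NatTrans.rightOp ((linearYoneda R (ModuleCat.{u} R)).map (f + g))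
      = NatTrans.rightOp ((linearYoneda R (ModuleCat.{u} R)).map f)
        + NatTrans.rightOp ((linearYoneda R (ModuleCat.{u} R)).map g) := by
    rw [linearYoneda_map_add]; ext M; rfl
  rw [e1, mapHomologicalComplex_app_add (S := R), Functor.map_add]
  simp only [Preadditive.comp_add, Preadditive.add_comp, unop_add]
  rfl

lemma Ext_obj_map_smul (n : ℕ) (X : (ModuleCat.{u} R)ᵒᵖ) {Y Y' : ModuleCat.{u} R}
    (r : R) (f : Y ⟶ Y') :
    ((Ext R (ModuleCat.{u} R) n).obj X).map (r • f)
      = r • ((Ext R (ModuleCat.{u} R) n).obj X).map f := by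
  obtain ⟨P⟩ : Nonempty (ProjectiveResolution X.unop) := HasProjectiveResolution.out
  rw [Ext_map_eq R n X (r • f) P, Ext_map_eq R n X f P]
  have e1 : NatTrans.rightOp ((linearYoneda R (ModuleCat.{u} R)).map (r • f))
      = r • NatTrans.rightOp ((linearYoneda R (ModuleCat.{u} R)).map f) := by
    rw [linearYoneda_map_smul]; ext M; rfl
  rw [e1, mapHomologicalComplex_app_smul (S := R)]
  rw [show (HomologicalComplex.homologyFunctor _ _ n).map
      (r • (NatTrans.mapHomologicalComplex
        (NatTrans.rightOp ((linearYoneda R (ModuleCat.{u} R)).map f)) _).app P.complex)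
    = r • (HomologicalComplex.homologyFunctor _ _ n).map
      ((NatTrans.mapHomologicalComplex
        (NatTrans.rightOp ((linearYoneda R (ModuleCat.{u} R)).map f)) _).app P.complex)
    from homologyMap_smul _ n r]
  simp only [Linear.comp_smul, Linear.smul_comp, unop_smul]
  rfl

end ExtLemmas

section LC

variable {R : Type u} [CommRing R] (J : Ideal R) (i : ℕ)

lemma localCohomology_hom_ext {M : ModuleCat.{u} R} {T : ModuleCat.{u} R}
    (u v : (localCohomology J i).obj M ⟶ T)
    (h : ∀ j : ℕᵒᵖᵒᵖ,
      haveI := localCohomology.hasColimitDiagram.{u, 0} (localCohomology.idealPowersDiagram J) i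
      (colimit.ι (localCohomology.diagram (localCohomology.idealPowersDiagram J) i) j).app M ≫ u
        = (colimit.ι (localCohomology.diagram (localCohomology.idealPowersDiagram J) i) j).app M
            ≫ v) : u = v := by
  haveI := localCohomology.hasColimitDiagram.{u, 0} (localCohomology.idealPowersDiagram J) i
  exact (isColimitOfPreserves ((evaluation _ _).obj M)
    (colimit.isColimit (localCohomology.diagram (localCohomology.idealPowersDiagram J) i))).hom_ext
    (fun j => h j)

lemma localCohomology_map_add {M N : ModuleCat.{u} R} (f g : M ⟶ N) :
    (localCohomology J i).map (f + g)
      = (localCohomology J i).map f + (localCohomology J i).map g := by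
  haveI := localCohomology.hasColimitDiagram.{u, 0} (localCohomology.idealPowersDiagram J) i
  set Dg := localCohomology.diagram (localCohomology.idealPowersDiagram J) i with hDg
  apply localCohomology_hom_ext
  intro j
  have nat : ∀ (u : M ⟶ N),
      (colimit.ι Dg j).app M ≫ (colimit Dg).map u = (Dg.obj j).map u ≫ (colimit.ι Dg j).app N :=
    fun u => ((colimit.ι Dg j).naturality u).symm
  have hobj : ∀ (u : M ⟶ N), (Dg.obj j).map u
      = ((Ext R (ModuleCat.{u} R) i).obj ((localCohomology.ringModIdeals
          (localCohomology.idealPowersDiagram J)).op.obj j)).map u := fun u => rfl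
  have t1 : (colimit.ι Dg j).app M ≫ (localCohomology J i).map (f + g)
      = (Dg.obj j).map (f + g) ≫ (colimit.ι Dg j).app N := nat (f + g)
  have t2 : (Dg.obj j).map (f + g) ≫ (colimit.ι Dg j).app N
      = ((Dg.obj j).map f + (Dg.obj j).map g) ≫ (colimit.ι Dg j).app N := by
        rw [hobj (f + g), hobj f, hobj g, Ext_obj_map_add]
        rfl
  have t3 : ((Dg.obj j).map f + (Dg.obj j).map g) ≫ (colimit.ι Dg j).app N
      = (colimit.ι Dg j).app M ≫ ((localCohomology J i).map f + (localCohomology J i).map g) := by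
        rw [Preadditive.add_comp, ← nat f, ← nat g]
        exact (Preadditive.comp_add _ _ _ _ _ _).symm
  exact (t1.trans t2).trans t3

lemma localCohomology_map_smul {M N : ModuleCat.{u} R} (r : R) (f : M ⟶ N) :
    (localCohomology J i).map (r • f) = r • (localCohomology J i).map f := by
  haveI := localCohomology.hasColimitDiagram.{u, 0} (localCohomology.idealPowersDiagram J) i
  set Dg := localCohomology.diagram (localCohomology.idealPowersDiagram J) i with hDg
  apply localCohomology_hom_ext
  intro j
  have nat : ∀ (u : M ⟶ N),
      (colimit.ι Dg j).app M ≫ (colimit Dg).map u = (Dg.obj j).map u ≫ (colimit.ι Dg j).app N :=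
    fun u => ((colimit.ι Dg j).naturality u).symm
  have hobj : ∀ (u : M ⟶ N), (Dg.obj j).map u
      = ((Ext R (ModuleCat.{u} R) i).obj ((localCohomology.ringModIdeals
          (localCohomology.idealPowersDiagram J)).op.obj j)).map u := fun u => rfl
  have t1 : (colimit.ι Dg j).app M ≫ (localCohomology J i).map (r • f)
      = (Dg.obj j).map (r • f) ≫ (colimit.ι Dg j).app N := nat (r • f)
  have t2 : (Dg.obj j).map (r • f) ≫ (colimit.ι Dg j).app N
      = (r • (Dg.obj j).map f) ≫ (colimit.ι Dg j).app N := by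
        rw [hobj (r • f), hobj f, Ext_obj_map_smul]
        rfl
  have t3 : (r • (Dg.obj j).map f) ≫ (colimit.ι Dg j).app N
      = (colimit.ι Dg j).app M ≫ (r • (localCohomology J i).map f) := by
        rw [Linear.smul_comp, ← nat f]
        exact (Linear.comp_smul _ _ _ _ _ _).symm
  exact (t1.trans t2).trans t3

end LC

end FPureAux

variable (p : ℕ) (R : Type u) [CommRing R] [Fact p.Prime] [CharP R p]

/-- `F_* R`: the ring `R` viewed as a module over itself via the Frobenius `x ↦ x ^ p`. -/
def FStar (p : ℕ) (R : Type u) : Type u := R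

instance : AddCommGroup (FStar p R) := inferInstanceAs (AddCommGroup R)

instance : Module R (FStar p R) := Module.compHom R (frobenius R p)

/-- The Frobenius `R → F_* R`, `x ↦ x ^ p`, as an `R`-linear map. -/
def frobeniusLinear : R →ₗ[R] FStar p R where
  toFun x := frobenius R p x
  map_add' x y := map_add (frobenius R p) x y
  map_smul' r x := map_mul (frobenius R p) r x

/-- A ring `R` of characteristic `p` is *F-pure* if the Frobenius `R → F_* R` is a pure map
of `R`-modules, i.e. stays injective after tensoring with every `R`-module. -/
def IsFPure : Prop :=
  ∀ (P : Type u) [AddCommGroup P] [Module R P],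
    Function.Injective (LinearMap.lTensor P (frobeniusLinear p R))

/-- A Noetherian local ring `(R, 𝔪)` of dimension `d` is *Gorenstein* iff its local cohomology
satisfies `H^i_𝔪(R) = 0` for `i ≠ d` and `H^d_𝔪(R)` is an injective hull of the residue
field `R/𝔪` (Grothendieck's characterization of Gorenstein local rings); we take this
characterization as the definition.  Here "injective hull" means: an injective `R`-module
together with an injective map from `R/𝔪` whose image is an essential submodule. -/
def IsGorensteinLocalOfDim (R : Type u) [CommRing R] [IsLocalRing R] (d : ℕ) : Prop :=
  IsNoetherianRing R ∧ ringKrullDim R = d ∧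
    (∀ i : ℕ, i ≠ d →
      Subsingleton ((localCohomology (IsLocalRing.maximalIdeal R) i).obj (ModuleCat.of R R))) ∧
    Module.Injective R ((localCohomology (IsLocalRing.maximalIdeal R) d).obj (ModuleCat.of R R)) ∧
    ∃ ι : (R ⧸ IsLocalRing.maximalIdeal R) →ₗ[R]
        ((localCohomology (IsLocalRing.maximalIdeal R) d).obj (ModuleCat.of R R)),
      Function.Injective ι ∧
        ∀ S : Submodule R ((localCohomology (IsLocalRing.maximalIdeal R) d).obj
          (ModuleCat.of R R)), S ≠ ⊥ → S ⊓ LinearMap.range ι ≠ ⊥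

/-- Let `(R, 𝔪)` be a Noetherian local Gorenstein ring of prime characteristic `p` and
dimension `d`.  If the map `H^d_𝔪(R) → H^d_𝔪(F_* R)` induced by Frobenius is injective, then
`R` is F-pure. -/
theorem fPure_of_injective_on_top_localCohomology
    [IsLocalRing R] [IsNoetherianRing R] (d : ℕ)
    (hGor : IsGorensteinLocalOfDim R d)
    (hinj : Function.Injective
      ((localCohomology (IsLocalRing.maximalIdeal R) d).map
        (ModuleCat.ofHom (frobeniusLinear p R)))) :
    IsFPure p R := by
  classical
  obtain ⟨-, -, -, hEinj, ι, hιinj, -⟩ := hGor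
  intro P _ _
  rw [injective_iff_map_eq_zero (LinearMap.lTensor P (frobeniusLinear p R))]
  intro z hz
  set a : P := TensorProduct.rid R P z with ha
  have hza : z = a ⊗ₜ[R] (1 : R) := by
    conv_lhs => rw [← (TensorProduct.rid R P).symm_apply_apply z]
    rw [TensorProduct.rid_symm_apply]
  by_contra hz0
  have ha0 : a ≠ 0 := fun h0 => hz0 (by rw [hza, h0, TensorProduct.zero_tmul])
  have hz1 : a ⊗ₜ[R] (frobeniusLinear p R 1) = (0 : TensorProduct R P (FStar p R)) := by
    have h1 : LinearMap.lTensor P (frobeniusLinear p R) z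
        = a ⊗ₜ[R] (frobeniusLinear p R 1) := by
      rw [hza, LinearMap.lTensor_tmul]
    rw [← h1, hz]
  -- Construct `h : P →ₗ[R] E` with `h a ≠ 0`, using injectivity of `E`.
  set I : Ideal R := Ideal.torsionOf R P a with hI
  have hInotTop : I ≠ ⊤ := by
    intro htop
    apply ha0
    have h1 : (1 : R) ∈ I := htop ▸ Submodule.mem_top
    rw [hI, Ideal.mem_torsionOf_iff] at h1
    simpa using h1
  have hIm : I ≤ IsLocalRing.maximalIdeal R := IsLocalRing.le_maximalIdeal hInotTop
  set g1 : R →ₗ[R] ((localCohomology (IsLocalRing.maximalIdeal R) d).obj (ModuleCat.of R R)) :=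
    ι.comp (IsLocalRing.maximalIdeal R).mkQ with hg1
  have hIker : I ≤ LinearMap.ker g1 := by
    intro r hr
    have : ((IsLocalRing.maximalIdeal R).mkQ) r = 0 :=
      (Submodule.Quotient.mk_eq_zero _).mpr (hIm hr)
    simp [hg1, LinearMap.mem_ker, this]
  set g0 : (R ⧸ I) →ₗ[R]
      ((localCohomology (IsLocalRing.maximalIdeal R) d).obj (ModuleCat.of R R)) :=
    Submodule.liftQ I g1 hIker with hg0
  set f0 : (R ⧸ I) →ₗ[R] P :=
    (Submodule.subtype _).comp (Ideal.quotTorsionOfEquivSpanSingleton R P a).toLinearMap with hf0d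
  have hf0 : Function.Injective f0 :=
    (Submodule.injective_subtype _).comp (Ideal.quotTorsionOfEquivSpanSingleton R P a).injective
  obtain ⟨h, hh⟩ := hEinj.out f0 hf0 g0
  have hfa : f0 (Submodule.Quotient.mk (1 : R)) = a := by
    rw [hf0d]
    simp only [LinearMap.coe_comp, Function.comp_apply, LinearEquiv.coe_coe]
    rw [Ideal.quotTorsionOfEquivSpanSingleton_apply_mk a (1 : R), one_smul]
    rfl
  have hha : h a = ι (Submodule.Quotient.mk (1 : R)) := by
    rw [← hfa, hh, hg0]
    exact Submodule.liftQ_apply I g1 (1 : R)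
  have hιne : ι (Submodule.Quotient.mk (1 : R)) ≠ 0 := by
    intro h0
    have h1m : (Submodule.Quotient.mk (1 : R) : R ⧸ IsLocalRing.maximalIdeal R) = 0 :=
      hιinj (by rw [h0, map_zero])
    rw [Submodule.Quotient.mk_eq_zero] at h1m
    exact (IsLocalRing.maximalIdeal.isMaximal R).ne_top ((Ideal.eq_top_iff_one _).mpr h1m)
  -- The bilinear pairing `E × F_* R → H^d(F_* R)`.
  set ρ : FStar p R → (ModuleCat.of R R ⟶ ModuleCat.of R (FStar p R)) :=
    fun m => ModuleCat.ofHom (LinearMap.toSpanSingleton R (FStar p R) m) with hρ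
  have ρadd : ∀ m m' : FStar p R, ρ (m + m') = ρ m + ρ m' := by
    intro m m'
    have t1 : LinearMap.toSpanSingleton R (FStar p R) (m + m')
        = LinearMap.toSpanSingleton R (FStar p R) m
          + LinearMap.toSpanSingleton R (FStar p R) m' := by
      apply LinearMap.ext
      intro s
      simp only [LinearMap.toSpanSingleton_apply, LinearMap.add_apply]
      exact smul_add s m m'
    show ModuleCat.ofHom (LinearMap.toSpanSingleton R (FStar p R) (m + m')) = _
    rw [t1]; rfl
  have ρsmul : ∀ (r : R) (m : FStar p R), ρ (r • m) = r • ρ m := by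
    intro r m
    have t1 : LinearMap.toSpanSingleton R (FStar p R) (r • m)
        = r • LinearMap.toSpanSingleton R (FStar p R) m := by
      apply LinearMap.ext
      intro s
      simp only [LinearMap.toSpanSingleton_apply, LinearMap.smul_apply]
      exact smul_comm s r m
    show ModuleCat.ofHom (LinearMap.toSpanSingleton R (FStar p R) (r • m)) = _
    rw [t1]; rfl
  set B := LinearMap.mk₂ R
    (fun (e : ((localCohomology (IsLocalRing.maximalIdeal R) d).obj (ModuleCat.of R R)))
      (m : FStar p R) =>
      ((localCohomology (IsLocalRing.maximalIdeal R) d).map (ρ m)) e)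
    (fun e e' m => map_add _ e e')
    (fun r e m => map_smul _ r e)
    (fun e m m' => by
      show ((localCohomology (IsLocalRing.maximalIdeal R) d).map (ρ (m + m'))) e
        = ((localCohomology (IsLocalRing.maximalIdeal R) d).map (ρ m)) e
          + ((localCohomology (IsLocalRing.maximalIdeal R) d).map (ρ m')) e
      rw [ρadd, FPureAux.localCohomology_map_add]
      rfl)
    (fun r e m => by
      show ((localCohomology (IsLocalRing.maximalIdeal R) d).map (ρ (r • m))) e
        = r • ((localCohomology (IsLocalRing.maximalIdeal R) d).map (ρ m)) e
      rw [ρsmul, FPureAux.localCohomology_map_smul]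
      rfl) with hB
  have h2 : (h a) ⊗ₜ[R] (frobeniusLinear p R 1)
      = (0 : TensorProduct R
          ((localCohomology (IsLocalRing.maximalIdeal R) d).obj (ModuleCat.of R R))
          (FStar p R)) := by
    have := congrArg (LinearMap.rTensor (FStar p R) h) hz1
    simpa [LinearMap.rTensor_tmul] using this
  have h3 : ((localCohomology (IsLocalRing.maximalIdeal R) d).map
      (ρ (frobeniusLinear p R 1))) (h a) = 0 := by
    have := congrArg (TensorProduct.lift B) h2
    simpa [hB, TensorProduct.lift.tmul, LinearMap.mk₂_apply] using this
  have hρ1 : ρ (frobeniusLinear p R 1) = ModuleCat.ofHom (frobeniusLinear p R) := by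
    have t : LinearMap.toSpanSingleton R (FStar p R) (frobeniusLinear p R 1)
        = frobeniusLinear p R := by
      apply LinearMap.ext
      intro r
      show r • (frobeniusLinear p R 1) = frobeniusLinear p R r
      show frobenius R p r * frobenius R p 1 = frobenius R p r
      rw [map_one, mul_one]
    show ModuleCat.ofHom (LinearMap.toSpanSingleton R (FStar p R) (frobeniusLinear p R 1)) = _
    rw [t]
  rw [hρ1] at h3
  have hha0 : h a = 0 := hinj (by rw [h3, map_zero])
  rw [hha] at hha0
  exact hιne hha0
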